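/- Let T be a triangulated category with a non-degenerate t-structure, and let a, N be integers with N > 0. Suppose given morphisms p : P → E and q : F → F' in T such that: (i) H^n(p) is an isomorphism for all n ≥ a - N and E lies in T^{≥ a}; (ii) H^n(q) is an isomorphism for all n ≥ a and F' lies in T^{≥ a - N}. If P is a retract of F (i.e., there are maps P → F → P composing to the identity), then E is a retract of F'. -/

import Mathlib

/-!
Common preamble: generation in triangulated categories, truncation triangles for
t-structures, "isomorphism in degrees ≥ a", levels `⟨G⟩_n`, `coprod_n`,
and Rouquier dimension.
-/

open CategoryTheory Limits Pretriangulated Triangulated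

namespace RouquierApprox

variable {C : Type*} [Category C] [Preadditive C] [HasZeroObject C] [HasShift C ℤ]
  [∀ (n : ℤ), (shiftFunctor C n).Additive] [Pretriangulated C]

/-- A t-structure is non-degenerate if `⋂ₙ T^{≥n} = 0 = ⋂ₙ T^{≤-n}`. -/
def IsNonDegenerate (t : TStructure C) : Prop :=
  (∀ X : C, (∀ n : ℤ, t.ge n X) → IsZero X) ∧ (∀ X : C, (∀ n : ℤ, t.le n X) → IsZero X)

/-- A t-structure is bounded if every object is bounded. -/
def IsBoundedTStructure (t : TStructure C) : Prop :=
  ∀ X : C, ∃ n : ℤ, 0 < n ∧ t.le n X ∧ t.ge (-n) X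

/-- A choice of truncation triangle `τ_{≤ a-1} A ⟶ A ⟶ τ_{≥ a} A ⟶ (τ_{≤ a-1} A)[1]`. -/
structure TruncGETriangle (t : TStructure C) (a : ℤ) (A : C) where
  left : C
  right : C
  left_le : t.le (a - 1) left
  right_ge : t.ge a right
  ι : left ⟶ A
  π : A ⟶ right
  δ : right ⟶ left⟦(1 : ℤ)⟧
  dist : Triangle.mk ι π δ ∈ distTriang C

/-- `f : A ⟶ B` induces isomorphisms on the cohomology objects `H^n` (with respect to
the t-structure `t`) for all `n ≥ a`; for a non-degenerate t-structure this is
equivalently expressed by saying that any morphism induced by `f` between the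
truncations `τ_{≥ a} A ⟶ τ_{≥ a} B` is an isomorphism. -/
def IsIsoInDegreesGE (t : TStructure C) (a : ℤ) {A B : C} (f : A ⟶ B) : Prop :=
  ∀ (TA : TruncGETriangle t a A) (TB : TruncGETriangle t a B) (g : TA.right ⟶ TB.right),
    TA.π ≫ g = f ≫ TB.π → IsIso g

/-- `P` is a retract (direct summand) of `F`. -/
def IsRetract (P F : C) : Prop := ∃ (i : P ⟶ F) (r : F ⟶ P), i ≫ r = 𝟙 P

/-- Finite coproducts of shifts of objects of `S`. -/
def finCoprodShifts (S : Set C) : Set C :=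
  {X | ∃ (k : ℕ) (obj : Fin k → C) (s : Fin k → ℤ),
    (∀ i, obj i ∈ S) ∧ Nonempty (X ≅ ⨁ (fun i => (obj i)⟦s i⟧))}

/-- `add S`: retracts of finite coproducts of shifts of objects of `S`, i.e. the
closure of `S` under shifts, finite coproducts and retracts. -/
def addSet (S : Set C) : Set C := {X | ∃ F ∈ finCoprodShifts S, IsRetract X F}

/-- Cones of morphisms from an object of `S` to an object of `T`. -/
def coneSet (S T : Set C) : Set C :=
  {Z | ∃ (A B : C) (f : A ⟶ B) (g : B ⟶ Z) (h : Z ⟶ A⟦(1 : ℤ)⟧),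
    A ∈ S ∧ B ∈ T ∧ Triangle.mk f g h ∈ distTriang C}

/-- The level filtration `⟨G⟩_n`: `⟨G⟩_0` consists of zero objects, `⟨G⟩_1 = add G`,
and `⟨G⟩_n = add (cones of maps from ⟨G⟩_{n-1} to ⟨G⟩_1)`. -/
def levelSet (G : C) : ℕ → Set C
  | 0 => {X | IsZero X}
  | 1 => addSet {G}
  | (n+2) => addSet (coneSet (levelSet G (n+1)) (addSet {G}))

/-- `coprod_n (G(-∞,∞))`: as `levelSet` but without retracts. -/
def coprodLevel (G : C) : ℕ → Set C
  | 0 => {X | IsZero X}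
  | 1 => finCoprodShifts {G}
  | (n+2) => coneSet (coprodLevel G (n+1)) (finCoprodShifts {G})

/-- The level of `E` with respect to `G`: the minimal `n` with `E ∈ ⟨G⟩_n`. -/
noncomputable def levelOf (G E : C) : ℕ∞ :=
  sInf {n : ℕ∞ | ∃ k : ℕ, n = k ∧ E ∈ levelSet G k}

/-- The Rouquier dimension of a (strictly full triangulated) subcategory `S` of `C`,
with levels computed in the ambient category: the least `d` such that
`S ⊆ ⟨G⟩_{d+1}` for some `G ∈ S`. -/
noncomputable def relRouquierDim (S : Set C) : ℕ∞ :=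
  sInf {d : ℕ∞ | ∃ (k : ℕ) (G : C), G ∈ S ∧ d = k ∧ S ⊆ levelSet G (k + 1)}

/-- `G` is a strong generator of the (strictly full triangulated) subcategory `S`. -/
def IsStrongGeneratorOf (S : Set C) (G : C) : Prop :=
  G ∈ S ∧ ∃ n : ℕ, S ⊆ levelSet G n

/-- A morphism `ψ : K ⟶ L` is `G`-ghost if every composition `G⟦n⟧ ⟶ K ⟶ L` vanishes. -/
def IsGhost (G : C) {K L : C} (ψ : K ⟶ L) : Prop :=
  ∀ (n : ℤ) (φ : G⟦n⟧ ⟶ K), φ ≫ ψ = 0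

end RouquierApprox

open CategoryTheory Limits Pretriangulated Triangulated RouquierApprox


section Aux

variable {C : Type*} [Category C] [Preadditive C] [HasZeroObject C] [HasShift C ℤ]
  [∀ (n : ℤ), (shiftFunctor C n).Additive] [Pretriangulated C]

lemma tstructure_hom_zero (t : TStructure C) {X Y : C} (f : X ⟶ Y) (n₀ n₁ : ℤ)
    (h : n₀ < n₁) (hX : t.le n₀ X) (hY : t.ge n₁ Y) : f = 0 := by
  have hX' : t.le 0 (X⟦n₀⟧) := t.le_shift n₀ n₀ 0 (by omega) X hX
  have hY' : t.ge (n₁ - n₀) (Y⟦n₀⟧) := t.ge_shift n₁ n₀ (n₁ - n₀) (by omega) Y hY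
  have hY'' : t.ge 1 (Y⟦n₀⟧) := t.ge_antitone (show (1:ℤ) ≤ n₁ - n₀ by omega) _ hY'
  have hz : (shiftFunctor C n₀).map f = 0 := t.zero' _ hX' hY''
  apply (shiftFunctor C n₀).map_injective
  rw [hz, Functor.map_zero]

lemma tstructure_le_of_isZero (t : TStructure C) (n : ℤ) {X : C} (hX : IsZero X) :
    t.le n X := by
  obtain ⟨L, R, hL, hR, f, g, h, mem⟩ := t.exists_triangle X n (n + 1) rfl
  have h3 : IsIso (Triangle.mk f g h).mor₃ :=
    ((Triangle.mk f g h).isZero₂_iff_isIso₃ mem).1 hX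
  have hRLE : t.le (n - 1) R := by
    have hL1 : t.le (n - 1) (L⟦(1 : ℤ)⟧) := t.le_shift n 1 (n - 1) (by omega) L hL
    exact (t.le (n - 1)).prop_of_iso (asIso (Triangle.mk f g h).mor₃).symm hL1
  have hRzero : IsZero R := by
    rw [IsZero.iff_id_eq_zero]
    exact tstructure_hom_zero t (𝟙 R) (n - 1) (n + 1) (by omega) hRLE hR
  have hLzero : IsZero L :=
    (Triangle.mk f g h).isZero₁_of_isZero₂₃ mem hX hRzero
  exact (t.le n).prop_of_iso (hLzero.iso hX) hL

end Aux

open ZeroObject in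
/-- Lemma 3.2. Let `T` be a triangulated category with a
non-degenerate t-structure and `a, N` integers, `N > 0`. Given `p : P ⟶ E` an
isomorphism in degrees `≥ a - N` with `E ∈ T^{≥ a}`, and `q : F ⟶ F'` an
isomorphism in degrees `≥ a` with `F' ∈ T^{≥ a - N}`: if `P` is a retract of `F`,
then `E` is a retract of `F'`. -/
theorem statement1 {C : Type*} [Category C] [Preadditive C] [HasZeroObject C] [HasShift C ℤ]
    [∀ (n : ℤ), (shiftFunctor C n).Additive] [Pretriangulated C]
    (t : TStructure C) (hnd : IsNonDegenerate t) (a N : ℤ) (hN : 0 < N)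
    {P E F F' : C} (p : P ⟶ E) (q : F ⟶ F')
    (hp : IsIsoInDegreesGE t (a - N) p) (hE : t.ge a E)
    (hq : IsIsoInDegreesGE t a q) (hF' : t.ge (a - N) F')
    (hPF : IsRetract P F) :
    IsRetract E F' := by
  obtain ⟨i, r, hir⟩ := hPF
  -- truncation triangle of P at a - N
  obtain ⟨LP, RP, hLP, hRP, ιP, πP, δP, memP⟩ := t.exists_triangle P (a - N - 1) (a - N) (by omega)
  let TP : TruncGETriangle t (a - N) P := ⟨LP, RP, hLP, hRP, ιP, πP, δP, memP⟩
  -- trivial truncation triangle of E at a - N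
  have hE' : t.ge (a - N) E := t.ge_antitone (show a - N ≤ a by omega) E hE
  let TE : TruncGETriangle t (a - N) E :=
    ⟨0, E, tstructure_le_of_isZero t _ (isZero_zero C), hE', 0, 𝟙 E, 0,
      contractible_distinguished₁ E⟩
  -- construct g : RP ⟶ E with p = πP ≫ g
  obtain ⟨g, hg⟩ : ∃ g : RP ⟶ E, p = πP ≫ g := (Triangle.mk ιP πP δP).yoneda_exact₂ memP p
    (tstructure_hom_zero t _ (a - N - 1) a (by omega) hLP hE)
  replace hg : p = πP ≫ g := hg
  have hgiso : IsIso g := hp TP TE g (by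
    show πP ≫ g = p ≫ 𝟙 E
    rw [Category.comp_id, ← hg])
  -- construct α' : RP ⟶ F' with i ≫ q = πP ≫ α'
  obtain ⟨α', hα'⟩ : ∃ α' : RP ⟶ F', i ≫ q = πP ≫ α' := (Triangle.mk ιP πP δP).yoneda_exact₂ memP (i ≫ q)
    (by
      change ιP ≫ i ≫ q = 0
      rw [← Category.assoc]
      exact tstructure_hom_zero t _ (a - N - 1) (a - N) (by omega) hLP hF')
  replace hα' : i ≫ q = πP ≫ α' := hα'
  -- truncation triangles of F and F' at a
  obtain ⟨LF, RF, hLF, hRF, ιF, πF, δF, memF⟩ := t.exists_triangle F (a - 1) a (by omega)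
  obtain ⟨LF', RF', hLF', hRF', ιF', πF', δF', memF'⟩ := t.exists_triangle F' (a - 1) a (by omega)
  let TF : TruncGETriangle t a F := ⟨LF, RF, hLF, hRF, ιF, πF, δF, memF⟩
  let TF' : TruncGETriangle t a F' := ⟨LF', RF', hLF', hRF', ιF', πF', δF', memF'⟩
  -- construct qbar : RF ⟶ RF' with q ≫ πF' = πF ≫ qbar
  obtain ⟨qbar, hqbar⟩ : ∃ qbar : RF ⟶ RF', q ≫ πF' = πF ≫ qbar := (Triangle.mk ιF πF δF).yoneda_exact₂ memF (q ≫ πF')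
    (by
      change ιF ≫ q ≫ πF' = 0
      rw [← Category.assoc]
      exact tstructure_hom_zero t _ (a - 1) a (by omega) hLF hRF')
  replace hqbar : q ≫ πF' = πF ≫ qbar := hqbar
  have hqiso : IsIso qbar := hq TF TF' qbar (by
    show πF ≫ qbar = q ≫ πF'
    rw [hqbar])
  -- construct s : RF ⟶ E with r ≫ p = πF ≫ s
  obtain ⟨s, hs⟩ : ∃ s : RF ⟶ E, r ≫ p = πF ≫ s := (Triangle.mk ιF πF δF).yoneda_exact₂ memF (r ≫ p)
    (by
      change ιF ≫ r ≫ p = 0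
      rw [← Category.assoc]
      exact tstructure_hom_zero t _ (a - 1) a (by omega) hLF hE)
  replace hs : r ≫ p = πF ≫ s := hs
  -- the retraction
  refine ⟨inv g ≫ α', πF' ≫ inv qbar ≫ s, ?_⟩
  have e1 : πP ≫ α' ≫ πF' ≫ inv qbar ≫ s = p := by
    calc πP ≫ α' ≫ πF' ≫ inv qbar ≫ s
        = (πP ≫ α') ≫ πF' ≫ inv qbar ≫ s := by simp only [Category.assoc]
      _ = i ≫ (q ≫ πF') ≫ inv qbar ≫ s := by
          rw [← hα']
          simp only [Category.assoc]
      _ = i ≫ (πF ≫ qbar) ≫ inv qbar ≫ s := by rw [hqbar]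
      _ = i ≫ πF ≫ s := by simp only [Category.assoc, IsIso.hom_inv_id_assoc]
      _ = i ≫ r ≫ p := by rw [← hs]
      _ = p := by rw [← Category.assoc, hir, Category.id_comp]
  have hcancel : πP ≫ (α' ≫ πF' ≫ inv qbar ≫ s - g) = 0 := by
    rw [Preadditive.comp_sub, e1, ← hg, sub_self]
  obtain ⟨w, hw⟩ : ∃ w : LP⟦(1 : ℤ)⟧ ⟶ E, α' ≫ πF' ≫ inv qbar ≫ s - g = δP ≫ w := (Triangle.mk ιP πP δP).yoneda_exact₃ memP _ hcancel
  replace hw : α' ≫ πF' ≫ inv qbar ≫ s - g = δP ≫ w := hw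
  have hw0 : w = 0 := tstructure_hom_zero t w (a - N - 2) a (by omega)
    (t.le_shift (a - N - 1) 1 (a - N - 2) (by omega) LP hLP) hE
  have key : α' ≫ πF' ≫ inv qbar ≫ s = g := by
    rw [hw0, comp_zero, sub_eq_zero] at hw
    exact hw
  rw [Category.assoc, key, IsIso.inv_hom_id]
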